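/- Let ν ∈ (0,1) and define H_μ(t) := Σ_{k=0}^∞ (t/4)^k/(k! Γ(μ+k+1)) for t ≥ 0. Then H_{−ν}(t)/H_ν(t) → +∞ as t → +∞. Consequently, for every b > 0 the Weyl function of the Bessel operator on (0,b) satisfies M_{ν,b}(x) = −(Γ(1−ν)/(2ν b^{2ν} Γ(1+ν))) H_{−ν}(−b²x)/H_ν(−b²x) → −∞ as x → −∞, so the extension determined by the boundary condition Γ₀ f = 0 is the Friedrichs extension. -/

import Mathlib

open MeasureTheory Set Filter

/-- `H_μ(t) = Σ_{k≥0} (t/4)^k/(k! Γ(μ+k+1))`, the entire series with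
`I_μ(s) = (s/2)^μ H_μ(s²)`. -/
noncomputable def besselH (μ : ℝ) (t : ℝ) : ℝ :=
  ∑' k : ℕ, (t / 4) ^ k / ((k.factorial : ℝ) * Real.Gamma (μ + k + 1))

namespace BH

noncomputable def term (μ t : ℝ) (k : ℕ) : ℝ :=
  (t / 4) ^ k / ((k.factorial : ℝ) * Real.Gamma (μ + k + 1))

lemma besselH_eq (μ t : ℝ) : besselH μ t = ∑' k, term μ t k := rfl

lemma term_scale (μ t : ℝ) (k : ℕ) : term μ t k = (t/4) ^ k * term μ 4 k := by
  unfold term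
  rw [show (4:ℝ)/4 = 1 by norm_num, one_pow, mul_one_div]

lemma arg_pos {μ : ℝ} (hμ : -1 < μ) (k : ℕ) : 0 < μ + k + 1 := by
  have : (0:ℝ) ≤ k := k.cast_nonneg
  linarith

lemma term_pos {μ t : ℝ} (hμ : -1 < μ) (ht : 0 < t) (k : ℕ) : 0 < term μ t k := by
  have hG := Real.Gamma_pos_of_pos (arg_pos hμ k)
  have hf : (0:ℝ) < k.factorial := by positivity
  exact div_pos (pow_pos (by linarith) k) (mul_pos hf hG)

lemma summable_term {μ t : ℝ} (hμ : -1 < μ) (ht : 0 < t) : Summable (term μ t) := by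
  have hpos := term_pos hμ ht
  refine summable_of_ratio_test_tendsto_lt_one (l := 0) one_pos
    (Eventually.of_forall fun n => (hpos n).ne') ?_
  have key : ∀ n : ℕ, ‖term μ t (n+1)‖ / ‖term μ t n‖ = (t/4) / (((n:ℝ)+1) * (μ + n + 1)) := by
    intro n
    have h1 : (0:ℝ) < μ + n + 1 := arg_pos hμ n
    rw [Real.norm_of_nonneg (hpos _).le, Real.norm_of_nonneg (hpos _).le]
    unfold term
    have hG : Real.Gamma (μ + ((n:ℕ)+1 : ℕ) + 1) = (μ + n + 1) * Real.Gamma (μ + n + 1) := by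
      have h2 := Real.Gamma_add_one h1.ne'
      push_cast
      rw [show μ + ((n:ℝ) + 1) + 1 = (μ + n + 1) + 1 by ring, h2]
    rw [hG, Nat.factorial_succ]
    have hG0 : Real.Gamma (μ + n + 1) ≠ 0 := (Real.Gamma_pos_of_pos h1).ne'
    have hf0 : ((n.factorial : ℝ)) ≠ 0 := by positivity
    have ht4 : t/4 ≠ 0 := by positivity
    push_cast
    rw [pow_succ]
    field_simp
  rw [funext key]
  have hd : Tendsto (fun n : ℕ => ((n:ℝ)+1) * (μ + n + 1)) atTop atTop := by
    apply Tendsto.atTop_mul_atTop₀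
    · exact tendsto_atTop_add_const_right _ 1 tendsto_natCast_atTop_atTop
    · have h := tendsto_atTop_add_const_right atTop (μ + 1) (tendsto_natCast_atTop_atTop (R := ℝ))
      refine h.congr fun n => by ring
  simpa using tendsto_const_nhds.div_atTop hd

lemma gamma_ratio {ν : ℝ} (hν0 : 0 < ν) (hν1 : ν < 1) {x : ℝ} (hx : 1 ≤ x) :
    ((x + ν) * (x - 1 + ν)) ^ ν * Real.Gamma (x + 1 - ν) ≤ Real.Gamma (x + 1 + ν) := by
  have h1 : 0 < x - 1 + ν := by linarith
  have h2 : 0 < x + ν := by linarith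
  have h3 : 0 < x + 1 + ν := by linarith
  have hD : 0 < (x + ν) * (x - 1 + ν) := mul_pos h2 h1
  have hGa : 0 < Real.Gamma (x + 1 + ν) := Real.Gamma_pos_of_pos h3
  have hGb : 0 < Real.Gamma (x - 1 + ν) := Real.Gamma_pos_of_pos h1
  have hH := Real.Gamma_mul_add_mul_le_rpow_Gamma_mul_rpow_Gamma h3 h1
      (by linarith : (0:ℝ) < 1 - ν) hν0 (by ring)
  rw [show (1 - ν) * (x + 1 + ν) + ν * (x - 1 + ν) = x + 1 - ν by ring] at hH
  have hrec : Real.Gamma (x + 1 + ν) = (x + ν) * (x - 1 + ν) * Real.Gamma (x - 1 + ν) := by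
    rw [show x + 1 + ν = (x + ν) + 1 by ring, Real.Gamma_add_one h2.ne',
        show x + ν = (x - 1 + ν) + 1 by ring, Real.Gamma_add_one h1.ne']
    ring
  calc ((x + ν) * (x - 1 + ν)) ^ ν * Real.Gamma (x + 1 - ν)
      ≤ ((x + ν) * (x - 1 + ν)) ^ ν *
        (Real.Gamma (x + 1 + ν) ^ (1 - ν) * Real.Gamma (x - 1 + ν) ^ ν) := by
        exact mul_le_mul_of_nonneg_left hH (Real.rpow_nonneg hD.le ν)
    _ = Real.Gamma (x + 1 + ν) := by
        set D := (x + ν) * (x - 1 + ν) with hDdef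
        set G := Real.Gamma (x - 1 + ν) with hGdef
        rw [hrec, Real.mul_rpow hD.le hGb.le,
          show D ^ ν * (D ^ (1-ν) * G ^ (1-ν) * G ^ ν) =
            (D ^ ν * D ^ (1-ν)) * (G ^ (1-ν) * G ^ ν) by ring,
          ← Real.rpow_add hD, ← Real.rpow_add hGb]
        norm_num

lemma gamma_ratio_tendsto {ν : ℝ} (hν0 : 0 < ν) :
    Tendsto (fun k : ℕ => (((k:ℝ) + ν) * ((k:ℝ) - 1 + ν)) ^ ν) atTop atTop := by
  apply (tendsto_rpow_atTop hν0).comp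
  apply Tendsto.atTop_mul_atTop₀
  · exact tendsto_atTop_add_const_right _ ν tendsto_natCast_atTop_atTop
  · exact (tendsto_atTop_add_const_right _ (-1+ν)
      (tendsto_natCast_atTop_atTop (R := ℝ))).congr fun n => by ring

theorem main1 {ν : ℝ} (hν0 : 0 < ν) (hν1 : ν < 1) :
    Tendsto (fun t : ℝ => besselH (-ν) t / besselH ν t) atTop atTop := by
  have hνm : (-1:ℝ) < -ν := by linarith
  have hνp : (-1:ℝ) < ν := by linarith
  rw [tendsto_atTop]
  intro M
  set M' := max M 1 with hM'def
  have hM'1 : (1:ℝ) ≤ M' := le_max_right _ _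
  have hM'0 : (0:ℝ) < M' := by linarith
  obtain ⟨N₀, hN₀⟩ := eventually_atTop.mp
    ((gamma_ratio_tendsto hν0).eventually_ge_atTop (2 * M'))
  set N := N₀ + 1 with hNdef
  -- termwise bound for k ≥ N
  have key : ∀ k, N ≤ k → ∀ t : ℝ, 0 < t → 2 * M' * term ν t k ≤ term (-ν) t k := by
    intro k hk t ht
    have hk1 : (1:ℝ) ≤ (k:ℝ) := by exact_mod_cast Nat.one_le_iff_ne_zero.mpr (by omega)
    have hg := gamma_ratio hν0 hν1 hk1
    have hgM : 2 * M' ≤ (((k:ℝ) + ν) * ((k:ℝ) - 1 + ν)) ^ ν := hN₀ k (by omega)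
    have hGm : 0 < Real.Gamma ((k:ℝ) + 1 - ν) := Real.Gamma_pos_of_pos (by linarith)
    have hGp : 0 < Real.Gamma ((k:ℝ) + 1 + ν) := Real.Gamma_pos_of_pos (by linarith)
    have h2MG : 2 * M' * Real.Gamma ((k:ℝ) + 1 - ν) ≤ Real.Gamma ((k:ℝ) + 1 + ν) :=
      le_trans (mul_le_mul_of_nonneg_right hgM hGm.le) hg
    unfold term
    rw [show -ν + (k:ℝ) + 1 = (k:ℝ) + 1 - ν by ring, show ν + (k:ℝ) + 1 = (k:ℝ) + 1 + ν by ring]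
    have hf : (0:ℝ) < k.factorial := by positivity
    have ha : (0:ℝ) ≤ (t/4) ^ k := by positivity
    rw [mul_div_assoc']
    rw [div_le_div_iff₀ (by positivity) (by positivity)]
    calc 2 * M' * (t/4) ^ k * ((k.factorial : ℝ) * Real.Gamma ((k:ℝ) + 1 - ν))
        = ((t/4) ^ k * (k.factorial : ℝ)) * (2 * M' * Real.Gamma ((k:ℝ) + 1 - ν)) := by ring
      _ ≤ ((t/4) ^ k * (k.factorial : ℝ)) * Real.Gamma ((k:ℝ) + 1 + ν) := by
          exact mul_le_mul_of_nonneg_left h2MG (by positivity)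
      _ = (t/4) ^ k * ((k.factorial : ℝ) * Real.Gamma ((k:ℝ) + 1 + ν)) := by ring
  -- eventual bound in t
  have hcN : 0 < term ν 4 N := term_pos hνp (by norm_num) N
  set C := (∑ k ∈ Finset.range N, term ν 4 k) / term ν 4 N with hCdef
  refine eventually_atTop.2 ⟨max 4 (4 * C), fun t ht => ?_⟩
  have ht4 : (4:ℝ) ≤ t := le_trans (le_max_left _ _) ht
  have ht0 : (0:ℝ) < t := by linarith
  have hx1 : (1:ℝ) ≤ t/4 := by linarith
  have hxC : C ≤ t/4 := by
    have := le_trans (le_max_right 4 (4*C)) ht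
    linarith
  have hsν := summable_term (t := t) hνp ht0
  have hsm := summable_term (t := t) hνm ht0
  have hsνt : Summable (fun k => term ν t (k + N)) := (summable_nat_add_iff N).mpr hsν
  have hsmt : Summable (fun k => term (-ν) t (k + N)) := (summable_nat_add_iff N).mpr hsm
  set S := ∑ k ∈ Finset.range N, term ν t k with hSdef
  set Tl := ∑' k, term ν t (k + N) with hTldef
  have hdecν : S + Tl = besselH ν t := by
    rw [besselH_eq]; exact Summable.sum_add_tsum_nat_add N hsν
  have hTl0 : 0 < Tl := Summable.tsum_pos hsνt (fun k => (term_pos hνp ht0 _).le) 0 (term_pos hνp ht0 _)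
  -- S ≤ Tl
  have hSTl : S ≤ Tl := by
    have h1 : S ≤ (t/4) ^ (N - 1) * (C * term ν 4 N) := by
      rw [hCdef, div_mul_cancel₀ _ hcN.ne', hSdef, Finset.mul_sum]
      apply Finset.sum_le_sum
      intro k hk
      rw [term_scale]
      have hkN : k ≤ N - 1 := by have := Finset.mem_range.mp hk; omega
      have : (t/4) ^ k ≤ (t/4) ^ (N - 1) := pow_le_pow_right₀ hx1 hkN
      exact mul_le_mul_of_nonneg_right this (term_pos hνp (by norm_num) k).le
    have h2 : (t/4) ^ (N - 1) * (C * term ν 4 N) ≤ (t/4) ^ N * term ν 4 N := by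
      have : (t/4) ^ (N-1) * C ≤ (t/4) ^ (N-1) * (t/4) :=
        mul_le_mul_of_nonneg_left hxC (by positivity)
      have hpow : (t/4) ^ (N-1) * (t/4) = (t/4) ^ N := by
        rw [← pow_succ, hNdef]; norm_num
      calc (t/4) ^ (N - 1) * (C * term ν 4 N) = ((t/4) ^ (N-1) * C) * term ν 4 N := by ring
        _ ≤ ((t/4) ^ (N-1) * (t/4)) * term ν 4 N := mul_le_mul_of_nonneg_right this hcN.le
        _ = (t/4) ^ N * term ν 4 N := by rw [hpow]
    have h3 : (t/4) ^ N * term ν 4 N ≤ Tl := by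
      have := Summable.le_tsum hsνt 0 (fun i _ => (term_pos hνp ht0 _).le)
      simpa [term_scale ν t N] using this
    linarith
  -- H₋ν ≥ 2M' Tl
  have hHm : 2 * M' * Tl ≤ besselH (-ν) t := by
    have hS' : 0 ≤ ∑ k ∈ Finset.range N, term (-ν) t k :=
      Finset.sum_nonneg fun k _ => (term_pos hνm ht0 k).le
    have htail : 2 * M' * Tl ≤ ∑' k, term (-ν) t (k + N) := by
      rw [hTldef, ← tsum_mul_left]
      exact Summable.tsum_le_tsum (fun k => key (k + N) (by omega) t ht0) (hsνt.mul_left _) hsmt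
    have hdecm : (∑ k ∈ Finset.range N, term (-ν) t k) + ∑' k, term (-ν) t (k + N)
        = besselH (-ν) t := by rw [besselH_eq]; exact Summable.sum_add_tsum_nat_add N hsm
    linarith
  have hHν0 : 0 < besselH ν t := by
    rw [besselH_eq]
    exact Summable.tsum_pos hsν (fun k => (term_pos hνp ht0 _).le) 0 (term_pos hνp ht0 _)
  have hfinal : M' * besselH ν t ≤ besselH (-ν) t := by
    have : M' * besselH ν t = M' * (S + Tl) := by rw [hdecν]
    nlinarith
  calc M ≤ M' := le_max_left _ _
    _ ≤ besselH (-ν) t / besselH ν t := (le_div_iff₀ hHν0).mpr hfinal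

end BH

/-- For `ν ∈ (0,1)`, `H_{−ν}(t)/H_ν(t) → +∞` as `t → +∞`; consequently, for every `b > 0`,
the Weyl function `M_{ν,b}(x) = −(Γ(1−ν)/(2ν b^{2ν} Γ(1+ν))) H_{−ν}(−b²x)/H_ν(−b²x)`
tends to `−∞` as `x → −∞`, so the extension with boundary condition `Γ₀f = 0` is the
Friedrichs extension. -/
theorem stmt13 (ν : ℝ) (hν : ν ∈ Ioo (0:ℝ) 1) :
    Tendsto (fun t : ℝ => besselH (-ν) t / besselH ν t) atTop atTop ∧
    ∀ b : ℝ, 0 < b →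
      Tendsto
        (fun x : ℝ =>
          -(Real.Gamma (1 - ν) / (2 * ν * b ^ (2 * ν) * Real.Gamma (1 + ν)))
            * (besselH (-ν) (-(b ^ 2) * x) / besselH ν (-(b ^ 2) * x)))
        atBot atBot := by
  obtain ⟨hν0, hν1⟩ := hν
  have h1 := BH.main1 hν0 hν1
  refine ⟨h1, fun b hb => ?_⟩
  have hC : 0 < Real.Gamma (1 - ν) / (2 * ν * b ^ (2 * ν) * Real.Gamma (1 + ν)) := by
    have hG1 : 0 < Real.Gamma (1 - ν) := Real.Gamma_pos_of_pos (by linarith)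
    have hG2 : 0 < Real.Gamma (1 + ν) := Real.Gamma_pos_of_pos (by linarith)
    have hbp : 0 < b ^ (2 * ν) := Real.rpow_pos_of_pos hb _
    positivity
  have hinner : Tendsto (fun x : ℝ => -(b ^ 2) * x) atBot atTop :=
    Tendsto.const_mul_atBot_of_neg (by nlinarith) tendsto_id
  have hcomp : Tendsto
      (fun x : ℝ => besselH (-ν) (-(b ^ 2) * x) / besselH ν (-(b ^ 2) * x)) atBot atTop :=
    h1.comp hinner
  exact hcomp.const_mul_atTop_of_neg (neg_neg_iff_pos.mpr hC)
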